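/- Let (X, Y) be a centered bivariate Gaussian vector with covariance matrix Σ (positive definite, with Var X = Var Y = σ² and Cov(X,Y) = ρσ², |ρ| < 1). For u > 0 set Δ_i = u (1^T Σ^{-1})_i, i = 1, 2. If Δ_1, Δ_2 > 0 then P(X > u, Y > u) ≤ (2π)^{-1} (det Σ)^{-1/2} (Δ_1 Δ_2)^{-1} exp(−(u²/2)·1^T Σ^{-1} 1), where 1 = (1,1)^T. -/

import Mathlib

open Real MeasureTheory Matrix


lemma exp_shift_integrable (u Δ : ℝ) (hΔ : 0 < Δ) :
    IntegrableOn (fun x => Real.exp (-(Δ * (x - u)))) (Set.Ioi u) := by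
  have h := (exp_neg_integrableOn_Ioi u hΔ).const_mul (Real.exp (Δ * u))
  refine (integrableOn_congr_fun (fun x _ => ?_) measurableSet_Ioi).mpr h
  rw [← Real.exp_add]; ring_nf

lemma exp_shift_integral (u Δ : ℝ) (hΔ : 0 < Δ) :
    ∫ x in Set.Ioi u, Real.exp (-(Δ * (x - u))) = Δ⁻¹ := by
  have hd : ∀ x ∈ Set.Ici u, HasDerivAt (fun x => -Δ⁻¹ * Real.exp (-(Δ * (x - u))))
      (Real.exp (-(Δ * (x - u)))) x := by
    intro x _
    have h1 : HasDerivAt (fun x => -(Δ * (x - u))) (-Δ) x := by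
      have h0 := (((hasDerivAt_id x).sub_const u).const_mul Δ).neg
      simp only [mul_one] at h0
      exact h0
    have := (h1.exp).const_mul (-Δ⁻¹)
    have hΔ0 : Δ ≠ 0 := hΔ.ne'
    rw [mul_comm (Real.exp _) (-Δ), ← mul_assoc, neg_mul_neg, inv_mul_cancel₀ hΔ0, one_mul] at this
    exact this
  have ht : Filter.Tendsto (fun x => -Δ⁻¹ * Real.exp (-(Δ * (x - u)))) Filter.atTop (nhds 0) := by
    rw [show (0:ℝ) = -Δ⁻¹ * 0 by ring]
    refine Filter.Tendsto.const_mul _ ?_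
    refine Real.tendsto_exp_atBot.comp ?_
    apply Filter.tendsto_neg_atBot_iff.mpr
    refine Filter.Tendsto.congr (f₁ := fun x => Δ * x + (-(Δ * u))) (by intro x; ring) ?_
    exact Filter.tendsto_atTop_add_const_right _ _ (Filter.tendsto_id.const_mul_atTop hΔ)
  have := integral_Ioi_of_hasDerivAt_of_tendsto' hd (exp_shift_integrable u Δ hΔ) ht
  rw [this]; simp


/-- Savage's upper bound on the joint upper tail of a nondegenerate centered bivariate
Gaussian vector with covariance matrix `S`, equal variances `σ2` and correlation `ρ`. -/
theorem savage_bivariate_tail (S : Matrix (Fin 2) (Fin 2) ℝ) (hpd : S.PosDef)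
    (σ2 ρ : ℝ) (h00 : S 0 0 = σ2) (h11 : S 1 1 = σ2)
    (h01 : S 0 1 = ρ * σ2) (h10 : S 1 0 = ρ * σ2) (hρ : |ρ| < 1)
    (u : ℝ) (hu : 0 < u) (Δ1 Δ2 : ℝ)
    (hΔ1 : Δ1 = u * ((1 : Fin 2 → ℝ) ᵥ* S⁻¹) 0)
    (hΔ2 : Δ2 = u * ((1 : Fin 2 → ℝ) ᵥ* S⁻¹) 1)
    (hΔ1pos : 0 < Δ1) (hΔ2pos : 0 < Δ2) :
    (∫ x in Set.Ioi u, ∫ y in Set.Ioi u,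
        (2 * Real.pi)⁻¹ * (Real.sqrt S.det)⁻¹ *
          Real.exp (-(![x, y] ⬝ᵥ (S⁻¹ *ᵥ ![x, y])) / 2))
      ≤ (2 * Real.pi)⁻¹ * (Real.sqrt S.det)⁻¹ * (Δ1 * Δ2)⁻¹ *
          Real.exp (-(u ^ 2 / 2) * ((1 : Fin 2 → ℝ) ⬝ᵥ (S⁻¹ *ᵥ (1 : Fin 2 → ℝ)))) := by
  set A := S⁻¹ with hA
  have hApd : A.PosDef := hpd.inv
  have hsym : A 1 0 = A 0 1 := by
    have := hApd.1
    have h := congrFun (congrFun this 1) 0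
    simpa [Matrix.conjTranspose_apply] using h.symm
  set c : ℝ := (2 * Real.pi)⁻¹ * (Real.sqrt S.det)⁻¹ with hc
  have hc0 : 0 ≤ c := by positivity
  set E : ℝ := Real.exp (-(u ^ 2 / 2) * ((1 : Fin 2 → ℝ) ⬝ᵥ (A *ᵥ (1 : Fin 2 → ℝ)))) with hE
  -- pointwise bound
  have hpt : ∀ x y : ℝ, u ≤ x → u ≤ y →
      c * Real.exp (-(![x, y] ⬝ᵥ (A *ᵥ ![x, y])) / 2)
        ≤ c * (E * (Real.exp (-(Δ1 * (x - u))) * Real.exp (-(Δ2 * (y - u))))) := by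
    intro x y hx hy
    rw [hE, ← Real.exp_add, ← Real.exp_add]
    refine mul_le_mul_of_nonneg_left (Real.exp_le_exp.mpr ?_) hc0
    have hv := hApd.posSemidef.dotProduct_mulVec_nonneg ![x - u, y - u]
    simp [dotProduct, Matrix.mulVec, Matrix.vecMul, Fin.sum_univ_two] at hv ⊢
    rw [hΔ1, hΔ2]
    simp [Matrix.vecMul, dotProduct, Fin.sum_univ_two]
    rw [hsym] at hv ⊢
    nlinarith [hv]
  -- inner bound
  have hinner : ∀ x : ℝ, x ∈ Set.Ioi u →
      (∫ y in Set.Ioi u, c * Real.exp (-(![x, y] ⬝ᵥ (A *ᵥ ![x, y])) / 2))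
        ≤ c * E * Real.exp (-(Δ1 * (x - u))) * Δ2⁻¹ := by
    intro x hx
    have hg : IntegrableOn
        (fun y => c * E * Real.exp (-(Δ1 * (x - u))) * Real.exp (-(Δ2 * (y - u))))
        (Set.Ioi u) := (exp_shift_integrable u Δ2 hΔ2pos).const_mul _
    have hle : (∫ y in Set.Ioi u, c * Real.exp (-(![x, y] ⬝ᵥ (A *ᵥ ![x, y])) / 2))
        ≤ ∫ y in Set.Ioi u, c * E * Real.exp (-(Δ1 * (x - u))) * Real.exp (-(Δ2 * (y - u))) := by
      refine integral_mono_of_nonneg ?_ hg ?_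
      · exact Filter.Eventually.of_forall fun y => by positivity
      · refine ae_restrict_of_forall_mem measurableSet_Ioi fun y hy => ?_
        have := hpt x y (le_of_lt hx) (le_of_lt hy)
        calc c * Real.exp (-(![x, y] ⬝ᵥ (A *ᵥ ![x, y])) / 2)
            ≤ c * (E * (Real.exp (-(Δ1 * (x - u))) * Real.exp (-(Δ2 * (y - u))))) := this
          _ = c * E * Real.exp (-(Δ1 * (x - u))) * Real.exp (-(Δ2 * (y - u))) := by ring
    calc (∫ y in Set.Ioi u, c * Real.exp (-(![x, y] ⬝ᵥ (A *ᵥ ![x, y])) / 2)) ≤ _ := hle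
      _ = c * E * Real.exp (-(Δ1 * (x - u))) * Δ2⁻¹ := by
          rw [MeasureTheory.integral_const_mul, exp_shift_integral u Δ2 hΔ2pos]
  -- outer bound
  have hgout : IntegrableOn
      (fun x => c * E * Δ2⁻¹ * Real.exp (-(Δ1 * (x - u)))) (Set.Ioi u) :=
    (exp_shift_integrable u Δ1 hΔ1pos).const_mul _
  have houter : (∫ x in Set.Ioi u, ∫ y in Set.Ioi u,
        c * Real.exp (-(![x, y] ⬝ᵥ (A *ᵥ ![x, y])) / 2))
      ≤ ∫ x in Set.Ioi u, c * E * Δ2⁻¹ * Real.exp (-(Δ1 * (x - u))) := by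
    refine integral_mono_of_nonneg ?_ hgout ?_
    · exact Filter.Eventually.of_forall fun x =>
        integral_nonneg fun y => by positivity
    · refine ae_restrict_of_forall_mem measurableSet_Ioi fun x hx => ?_
      calc (∫ y in Set.Ioi u, c * Real.exp (-(![x, y] ⬝ᵥ (A *ᵥ ![x, y])) / 2))
          ≤ c * E * Real.exp (-(Δ1 * (x - u))) * Δ2⁻¹ := hinner x hx
        _ = c * E * Δ2⁻¹ * Real.exp (-(Δ1 * (x - u))) := by ring
  calc (∫ x in Set.Ioi u, ∫ y in Set.Ioi u,
        c * Real.exp (-(![x, y] ⬝ᵥ (A *ᵥ ![x, y])) / 2)) ≤ _ := houter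
    _ = c * E * Δ2⁻¹ * Δ1⁻¹ := by
        rw [MeasureTheory.integral_const_mul, exp_shift_integral u Δ1 hΔ1pos]
    _ = c * (Δ1 * Δ2)⁻¹ * E := by rw [mul_inv]; ring
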